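/- Let (λ_j) be positive reals and (α_j) real with Σ|α_j| < ∞, and fix τ > 0. Then there is a constant C_τ > 0 such that for all t ∈ (0, 2τ) and all n ≥ 1, |φ(t) − Σ_{k=0}^n b_k (t−τ)^k| ≤ (C_τ/√n) · (|t−τ|/τ)^{n+1} / (1 − |t−τ|/τ) when |t−τ| < τ, where b_k = Σ_j α_j e^{-λ_j τ}(−λ_j)^k/k!. -/

import Mathlib

open Real Finset

/-- Stirling-type bound: for `k ≥ 1`, `exp (-x) * x ^ k ≤ k! / (a * √k)`. -/
lemma aux_stirling : ∃ a : ℝ, 0 < a ∧ ∀ k : ℕ, 1 ≤ k → ∀ x : ℝ, 0 ≤ x →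
    Real.exp (-x) * x ^ k ≤ (k.factorial : ℝ) / (a * Real.sqrt k) := by
  obtain ⟨a, ha, hstir⟩ := Stirling.stirlingSeq'_bounded_by_pos_constant
  refine ⟨min a 1, lt_min ha one_pos, fun k hk x hx => ?_⟩
  have hk0 : (0:ℝ) < k := by exact_mod_cast hk
  have h1 : Real.exp (-x) * x ^ k ≤ ((k : ℝ) / Real.exp 1) ^ k := by
    have hxk : x / k ≤ Real.exp (x / k - 1) := by
      have := Real.add_one_le_exp (x / k - 1); linarith
    have h2 : (x / k) ^ k ≤ Real.exp (x / k - 1) ^ k :=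
      pow_le_pow_left₀ (by positivity) hxk k
    have h3 : Real.exp (x / k - 1) ^ k = Real.exp (x - k) := by
      rw [← Real.exp_nat_mul]; congr 1; field_simp
    rw [h3] at h2
    have h5 : x ^ k ≤ Real.exp (x - k) * (k : ℝ) ^ k := by
      have h4 : x ^ k = (x / k) ^ k * (k : ℝ) ^ k := by
        rw [div_pow]; field_simp
      rw [h4]
      exact mul_le_mul_of_nonneg_right h2 (by positivity)
    have h6 : ((k : ℝ) / Real.exp 1) ^ k = (k : ℝ) ^ k * Real.exp (-(k:ℝ)) := by
      rw [div_pow, Real.exp_one_pow, Real.exp_neg]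
      ring
    rw [h6]
    calc Real.exp (-x) * x ^ k ≤ Real.exp (-x) * (Real.exp (x - k) * (k:ℝ) ^ k) :=
          mul_le_mul_of_nonneg_left h5 (Real.exp_pos _).le
      _ = (k : ℝ) ^ k * Real.exp (-(k:ℝ)) := by
          rw [← mul_assoc, ← Real.exp_add]; ring_nf
  have hk1 : k ≠ 0 := by omega
  have hsq2 : (0:ℝ) < Real.sqrt (2 * k) := Real.sqrt_pos.2 (by positivity)
  have hpow : (0:ℝ) < ((k : ℝ) / Real.exp 1) ^ k := by positivity
  have hfact : (k.factorial : ℝ) =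
      Stirling.stirlingSeq k * (Real.sqrt (2 * k) * ((k : ℝ) / Real.exp 1) ^ k) := by
    rw [Stirling.stirlingSeq]; field_simp
  have hstir' : min a 1 ≤ Stirling.stirlingSeq k := by
    obtain ⟨m, rfl⟩ : ∃ m, k = m + 1 := ⟨k - 1, by omega⟩
    exact le_trans (min_le_left _ _) (hstir m)
  have hsqk : Real.sqrt k ≤ Real.sqrt (2 * k) := by
    apply Real.sqrt_le_sqrt; nlinarith
  have hmin0 : (0:ℝ) < min a 1 := lt_min ha one_pos
  have h7 : min a 1 * Real.sqrt k * ((k : ℝ) / Real.exp 1) ^ k ≤ (k.factorial : ℝ) := by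
    rw [hfact]
    have hmul : min a 1 * Real.sqrt k ≤ Stirling.stirlingSeq k * Real.sqrt (2 * k) :=
      mul_le_mul hstir' hsqk (Real.sqrt_nonneg _) (hmin0.le.trans hstir')
    calc min a 1 * Real.sqrt k * ((k : ℝ) / Real.exp 1) ^ k
        ≤ Stirling.stirlingSeq k * Real.sqrt (2 * k) * ((k : ℝ) / Real.exp 1) ^ k :=
          mul_le_mul_of_nonneg_right hmul hpow.le
      _ = _ := by ring
  have hden : 0 < min a 1 * Real.sqrt k := mul_pos hmin0 (Real.sqrt_pos.2 hk0)
  rw [le_div_iff₀ hden]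
  calc Real.exp (-x) * x ^ k * (min a 1 * Real.sqrt k)
      ≤ ((k : ℝ) / Real.exp 1) ^ k * (min a 1 * Real.sqrt k) :=
        mul_le_mul_of_nonneg_right h1 hden.le
    _ = min a 1 * Real.sqrt k * ((k : ℝ) / Real.exp 1) ^ k := by ring
    _ ≤ (k.factorial : ℝ) := h7

set_option maxHeartbeats 1000000 in
theorem stmt_6 (lam alpha : ℕ → ℝ) (hlam : ∀ j, 0 < lam j)
    (hsum : Summable fun j => |alpha j|) (τ : ℝ) (hτ : 0 < τ) :
    ∃ C : ℝ, 0 < C ∧ ∀ t ∈ Set.Ioo 0 (2 * τ), ∀ n : ℕ, 1 ≤ n → |t - τ| < τ →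
      |(∑' j, alpha j * Real.exp (-lam j * t)) -
        ∑ k ∈ Finset.range (n + 1),
          (∑' j, alpha j * Real.exp (-lam j * τ) * (-lam j) ^ k / k.factorial)
            * (t - τ) ^ k|
        ≤ C / Real.sqrt n * ((|t - τ| / τ) ^ (n + 1) / (1 - |t - τ| / τ)) := by
  obtain ⟨a, ha, hstirb⟩ := aux_stirling
  set A := ∑' j, |alpha j| with hA
  have hA0 : 0 ≤ A := tsum_nonneg fun j => abs_nonneg _
  refine ⟨(A + 1) / a, by positivity, ?_⟩
  rintro t ⟨ht0, ht2⟩ n hn hst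
  set s := t - τ with hs
  set ρ := |s| / τ with hρ
  have hρ0 : 0 ≤ ρ := by positivity
  have hρ1 : ρ < 1 := (div_lt_one hτ).2 hst
  have hexp : ∀ x : ℝ, Real.exp x = ∑' k : ℕ, x ^ k / k.factorial := fun x => by
    rw [Real.exp_eq_exp_ℝ]; exact congrFun NormedSpace.exp_eq_tsum_div x
  -- the double-indexed family
  set F : ℕ × ℕ → ℝ := fun p =>
    alpha p.1 * Real.exp (-lam p.1 * τ) * (-lam p.1 * s) ^ p.2 / (p.2).factorial with hF
  have hFabs : ∀ j k : ℕ, |F (j, k)| =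
      |alpha j| * Real.exp (-lam j * τ) * ((lam j * |s|) ^ k / k.factorial) := by
    intro j k
    rw [hF]
    rw [abs_div, abs_mul, abs_mul, abs_pow, Nat.abs_cast,
      abs_of_pos (Real.exp_pos _), abs_mul, abs_neg, abs_of_pos (hlam j)]
    ring
  have hFslice : ∀ j, Summable fun k => |F (j, k)| := by
    intro j
    apply Summable.congr (((Real.summable_pow_div_factorial (lam j * |s|)).mul_left
      (|alpha j| * Real.exp (-lam j * τ))))
    intro k
    rw [hFabs j k]
  have hFmarg : ∀ j, (∑' k, |F (j, k)|) ≤ |alpha j| := by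
    intro j
    have h1 : (∑' k, |F (j, k)|) =
        |alpha j| * Real.exp (-lam j * τ) * Real.exp (lam j * |s|) := by
      rw [hexp (lam j * |s|), mul_assoc, ← tsum_mul_left, ← tsum_mul_left]
      exact tsum_congr fun k => by rw [hFabs j k]; ring
    rw [h1, mul_assoc, ← Real.exp_add]
    have h2 : Real.exp (-lam j * τ + lam j * |s|) ≤ 1 := by
      rw [Real.exp_le_one_iff]
      have := (hlam j).le
      nlinarith [hst.le, abs_nonneg s]
    nlinarith [abs_nonneg (alpha j), Real.exp_pos (-lam j * τ + lam j * |s|)]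
  have hFabsSummable : Summable fun p : ℕ × ℕ => |F p| := by
    rw [summable_prod_of_nonneg (fun p => abs_nonneg _)]
    exact ⟨fun j => hFslice j, Summable.of_nonneg_of_le
      (fun j => tsum_nonneg fun k => abs_nonneg _) hFmarg hsum⟩
  have hFsummable : Summable F :=
    Summable.of_norm (by simpa only [Real.norm_eq_abs] using hFabsSummable)
  -- the Taylor series terms
  set g : ℕ → ℝ := fun k =>
    (∑' j, alpha j * Real.exp (-lam j * τ) * (-lam j) ^ k / k.factorial) * s ^ k with hg
  have hgk : ∀ k, (∑' j, F (j, k)) = g k := by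
    intro k
    simp only [hg]
    rw [← tsum_mul_right]
    apply tsum_congr
    intro j
    simp only [hF]
    rw [mul_pow]
    ring
  -- the expansion of φ
  have hphi : (∑' j, alpha j * Real.exp (-lam j * t)) = ∑' k, g k := by
    have hjk : ∀ j, alpha j * Real.exp (-lam j * t) = ∑' k, F (j, k) := by
      intro j
      have ht : -lam j * t = -lam j * τ + -lam j * s := by rw [hs]; ring
      rw [ht, Real.exp_add, hexp (-lam j * s), ← tsum_mul_left, ← tsum_mul_left]
      apply tsum_congr
      intro k
      simp only [hF]
      ring
    rw [tsum_congr hjk]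
    have hFu : Summable (Function.uncurry fun j k => F (j, k)) := by
      exact hFsummable
    rw [← Summable.tsum_comm' hFu (fun j => hFsummable.prod_factor j)
      (fun k => hFsummable.prod_symm.prod_factor k)]
    exact tsum_congr hgk
  have hgsummable : Summable g := by
    apply Summable.congr (hFsummable.prod_symm.prod) hgk
  -- bound on |g k| for k ≥ 1
  have hbk : ∀ k : ℕ, 1 ≤ k → |g k| ≤ A / a * (ρ ^ k / Real.sqrt k) := by
    intro k hk
    have hsk : (0:ℝ) < Real.sqrt k := Real.sqrt_pos.2 (by exact_mod_cast hk)
    have hterm : ∀ j, |alpha j * Real.exp (-lam j * τ) * (-lam j) ^ k / k.factorial| ≤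
        |alpha j| * (1 / (a * Real.sqrt k * τ ^ k)) := by
      intro j
      have hlj := hlam j
      have hkey := hstirb k hk (lam j * τ) (by positivity)
      have habs : |alpha j * Real.exp (-lam j * τ) * (-lam j) ^ k / k.factorial| =
          |alpha j| * (Real.exp (-(lam j * τ)) * lam j ^ k) / k.factorial := by
        rw [abs_div, abs_mul, abs_mul, abs_pow, abs_neg, abs_of_pos hlj,
          abs_of_pos (Real.exp_pos _), Nat.abs_cast, neg_mul]
        ring
      rw [habs, div_le_iff₀ (by positivity : (0:ℝ) < (k.factorial : ℝ))]
      have h2 : Real.exp (-(lam j * τ)) * lam j ^ k =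
          Real.exp (-(lam j * τ)) * (lam j * τ) ^ k / τ ^ k := by
        rw [mul_pow]; field_simp
      rw [h2]
      have hτk : (0:ℝ) < τ ^ k := by positivity
      calc |alpha j| * (Real.exp (-(lam j * τ)) * (lam j * τ) ^ k / τ ^ k)
          ≤ |alpha j| * ((k.factorial : ℝ) / (a * Real.sqrt k) / τ ^ k) := by
            apply mul_le_mul_of_nonneg_left _ (abs_nonneg _)
            exact div_le_div_of_nonneg_right hkey hτk.le
        _ = |alpha j| * (1 / (a * Real.sqrt k * τ ^ k)) * k.factorial := by
            field_simp
    have hsummable_term :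
        Summable fun j => |alpha j * Real.exp (-lam j * τ) * (-lam j) ^ k / k.factorial| :=
      Summable.of_nonneg_of_le (fun j => abs_nonneg _) hterm
        (hsum.mul_right _)
    have hbka : |∑' j, alpha j * Real.exp (-lam j * τ) * (-lam j) ^ k / k.factorial| ≤
        A * (1 / (a * Real.sqrt k * τ ^ k)) := by
      calc |∑' j, alpha j * Real.exp (-lam j * τ) * (-lam j) ^ k / k.factorial|
          ≤ ∑' j, |alpha j * Real.exp (-lam j * τ) * (-lam j) ^ k / k.factorial| := by
            have := norm_tsum_le_tsum_norm
              (f := fun j => alpha j * Real.exp (-lam j * τ) * (-lam j) ^ k / k.factorial)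
              (by simpa only [Real.norm_eq_abs] using hsummable_term)
            simpa only [Real.norm_eq_abs] using this
        _ ≤ ∑' j, |alpha j| * (1 / (a * Real.sqrt k * τ ^ k)) :=
            Summable.tsum_le_tsum hterm hsummable_term (hsum.mul_right _)
        _ = A * (1 / (a * Real.sqrt k * τ ^ k)) := tsum_mul_right
    have : |g k| ≤ A * (1 / (a * Real.sqrt k * τ ^ k)) * |s| ^ k := by
      simp only [hg]
      rw [abs_mul, abs_pow]
      exact mul_le_mul_of_nonneg_right hbka (by positivity)
    refine this.trans (le_of_eq ?_)
    have hτk : (τ:ℝ) ^ k ≠ 0 := by positivity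
    have ha' : a ≠ 0 := ne_of_gt ha
    have hsk' : Real.sqrt k ≠ 0 := ne_of_gt hsk
    rw [hρ, div_pow]
    field_simp
    try ring
    try tauto
  -- rewrite the difference as a tail
  have hsplit : ∑ k ∈ Finset.range (n + 1), g k + ∑' i, g (i + (n + 1)) = ∑' k, g k :=
    Summable.sum_add_tsum_nat_add (n + 1) hgsummable
  have hdiff : (∑' j, alpha j * Real.exp (-lam j * t)) -
      ∑ k ∈ Finset.range (n + 1),
        (∑' j, alpha j * Real.exp (-lam j * τ) * (-lam j) ^ k / k.factorial) * s ^ k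
      = ∑' i, g (i + (n + 1)) := by
    have : ∑ k ∈ Finset.range (n + 1),
        (∑' j, alpha j * Real.exp (-lam j * τ) * (-lam j) ^ k / k.factorial) * s ^ k
        = ∑ k ∈ Finset.range (n + 1), g k := rfl
    rw [this, hphi]
    linarith
  rw [hdiff]
  -- the comparison series
  have hsn : (0:ℝ) < Real.sqrt n := Real.sqrt_pos.2 (by exact_mod_cast hn)
  set B : ℕ → ℝ := fun i => A / a / Real.sqrt n * (ρ ^ (n + 1) * ρ ^ i) with hB
  have hBsummable : Summable B := by
    apply Summable.mul_left
    exact (summable_geometric_of_lt_one hρ0 hρ1).mul_left _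
  have htail_bound : ∀ i : ℕ, |g (i + (n + 1))| ≤ B i := by
    intro i
    have hk : 1 ≤ i + (n + 1) := by omega
    refine (hbk _ hk).trans ?_
    simp only [hB]
    have hsk : Real.sqrt n ≤ Real.sqrt (i + (n + 1) : ℕ) := by
      apply Real.sqrt_le_sqrt
      push_cast; linarith
    have hsk0 : (0:ℝ) < Real.sqrt (i + (n + 1) : ℕ) := hsn.trans_le hsk
    have h1 : ρ ^ (i + (n + 1)) / Real.sqrt (i + (n + 1) : ℕ) ≤
        ρ ^ (i + (n + 1)) / Real.sqrt n := by
      apply div_le_div_of_nonneg_left (by positivity) hsn hsk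
    calc A / a * (ρ ^ (i + (n + 1)) / Real.sqrt (i + (n + 1) : ℕ))
        ≤ A / a * (ρ ^ (i + (n + 1)) / Real.sqrt n) :=
          mul_le_mul_of_nonneg_left h1 (by positivity)
      _ = A / a / Real.sqrt n * (ρ ^ (n + 1) * ρ ^ i) := by
          rw [← pow_add]
          rw [show i + (n + 1) = n + 1 + i by omega]
          ring
  have hsum_tail : Summable fun i => |g (i + (n + 1))| :=
    Summable.of_nonneg_of_le (fun i => abs_nonneg _) htail_bound hBsummable
  have h1ρ : (0:ℝ) < 1 - ρ := by linarith
  calc |∑' i, g (i + (n + 1))|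
      ≤ ∑' i, |g (i + (n + 1))| := by
        have := norm_tsum_le_tsum_norm (f := fun i => g (i + (n + 1)))
          (by simpa only [Real.norm_eq_abs] using hsum_tail)
        simpa only [Real.norm_eq_abs] using this
    _ ≤ ∑' i, B i := Summable.tsum_le_tsum htail_bound hsum_tail hBsummable
    _ = A / a / Real.sqrt n * (ρ ^ (n + 1) * (1 - ρ)⁻¹) := by
        simp only [hB]
        rw [tsum_mul_left, tsum_mul_left, tsum_geometric_of_lt_one hρ0 hρ1]
    _ ≤ (A + 1) / a / Real.sqrt n * (ρ ^ (n + 1) / (1 - ρ)) := by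
        rw [div_eq_mul_inv (ρ ^ (n+1))]
        gcongr
        linarith
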